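/- Let C : ℝ → ℝ be differentiable and satisfy the parameter shift rule C'(θ) = (C(θ + π/2) − C(θ − π/2))/2 for all θ, and be 2π-periodic. If θ uniform on [0,2π] gives Var_θ[C(θ + π) − C(θ)] ≤ G, then Var_θ[C'(θ)] ≤ G/4. -/

import Mathlib

open MeasureTheory ProbabilityTheory Real

/-- The uniform probability measure on `[0, 2π]`. -/
noncomputable def unifCircle : Measure ℝ :=
  (ENNReal.ofReal (2 * π))⁻¹ • volume.restrict (Set.Icc 0 (2 * π))

instance : IsProbabilityMeasure unifCircle := by
  constructor
  simp only [unifCircle, Measure.smul_apply, Measure.restrict_apply MeasurableSet.univ,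
    Set.univ_inter, Real.volume_Icc, smul_eq_mul, sub_zero]
  rw [ENNReal.inv_mul_cancel]
  · simp only [ne_eq, ENNReal.ofReal_eq_zero, not_le]
    positivity
  · exact ENNReal.ofReal_ne_top

lemma integral_shift (g : ℝ → ℝ) (hp : Function.Periodic g (2 * π)) (c : ℝ) :
    ∫ θ, g (θ + c) ∂unifCircle = ∫ θ, g θ ∂unifCircle := by
  have h2π : (0:ℝ) ≤ 2 * π := by positivity
  simp only [unifCircle, integral_smul_measure]
  congr 1
  rw [MeasureTheory.integral_Icc_eq_integral_Ioc, MeasureTheory.integral_Icc_eq_integral_Ioc,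
    ← intervalIntegral.integral_of_le h2π, ← intervalIntegral.integral_of_le h2π,
    intervalIntegral.integral_comp_add_right g c]
  have := hp.intervalIntegral_add_eq c 0
  rw [zero_add] at this
  rw [← this]
  congr 1 <;> ring

lemma memLp_of_cont_per (g : ℝ → ℝ) (hg : Continuous g) (hp : Function.Periodic g (2 * π)) :
    MemLp g 2 unifCircle := by
  have hb := hp.isBounded_of_continuous (by positivity) hg
  obtain ⟨M, hM⟩ := isBounded_iff_forall_norm_le.mp hb
  exact MemLp.of_bound hg.aestronglyMeasurable M
    (Filter.Eventually.of_forall fun x => hM _ (Set.mem_range_self x))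

lemma variance_shift (g : ℝ → ℝ) (hg : Continuous g) (hp : Function.Periodic g (2 * π)) (c : ℝ) :
    variance (fun θ => g (θ + c)) unifCircle = variance g unifCircle := by
  have hg2 : Continuous (fun θ => g θ ^ 2) := by continuity
  have hp2 : Function.Periodic (fun θ => g θ ^ 2) (2 * π) := fun x => by simp [hp x]
  have hgc : Continuous (fun θ => g (θ + c)) := hg.comp (by continuity)
  have hpc : Function.Periodic (fun θ => g (θ + c)) (2 * π) := fun x => by
    simp only; rw [show x + 2 * π + c = x + c + 2 * π by ring, hp]
  rw [variance_eq_sub (memLp_of_cont_per g hg hp),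
    variance_eq_sub (memLp_of_cont_per _ hgc hpc)]
  have h1 : ∫ θ, g (θ + c) ∂unifCircle = ∫ θ, g θ ∂unifCircle := integral_shift g hp c
  have h2 : ∫ θ, g (θ + c) ^ 2 ∂unifCircle = ∫ θ, g θ ^ 2 ∂unifCircle :=
    integral_shift (fun θ => g θ ^ 2) hp2 c
  simp only [Pi.pow_apply]
  rw [h1, h2]

/-- Cost concentration implies barren plateaus: if a differentiable `2π`-periodic cost
satisfies the parameter shift rule and the variance of the difference `C(θ+π) - C(θ)`
over uniform `θ` is at most `G`, then the variance of the derivative is at most `G/4`. -/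
theorem variance_deriv_le_of_variance_diff_le
    (C : ℝ → ℝ) (hC : Differentiable ℝ C) (hper : Function.Periodic C (2 * π))
    (hPSR : ∀ θ : ℝ, deriv C θ = (C (θ + π / 2) - C (θ - π / 2)) / 2)
    (G : ℝ)
    (hG : variance (fun θ => C (θ + π) - C θ) unifCircle ≤ G) :
    variance (fun θ => deriv C θ) unifCircle ≤ G / 4 := by
  set f : ℝ → ℝ := fun θ => C (θ + π) - C θ with hf
  have hfc : Continuous f := by
    have := hC.continuous
    fun_prop
  have hfp : Function.Periodic f (2 * π) := fun x => by
    simp only [hf]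
    rw [hper, show x + 2 * π + π = x + π + 2 * π by ring, hper]
  have heq : (fun θ => deriv C θ) = (2:ℝ)⁻¹ • fun θ => f (θ + (-(π/2))) := by
    funext θ
    simp only [Pi.smul_apply, smul_eq_mul, hf, hPSR θ]
    ring_nf
  rw [heq, variance_smul]
  have := variance_shift f hfc hfp (-(π/2))
  rw [this]
  nlinarith [variance_nonneg f unifCircle]
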